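/- For every m ≥ 2 there exist real constants c_1, c_2 > 0 such that for all integers n ≥ 2m−2, c_1·C_{n−m+2} ≤ F(n,m) ≤ c_2·C_{n−m+2}, where F(n,m) = ∑ C_{r_1}·…·C_{r_m}, the sum being over all m-tuples (r_1,…,r_m) of integers with each r_i ≥ 1 and r_1+⋯+r_m = n−m+2. -/

import Mathlib

open Finset

lemma my_catalan_pos (n : ℕ) : 0 < catalan n := by
  have h := succ_mul_catalan_eq_centralBinom n
  have h2 := Nat.centralBinom_pos n
  nlinarith

lemma catalan_succ_le (n : ℕ) : catalan (n + 1) ≤ 4 * catalan n := by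
  have h1 := succ_mul_catalan_eq_centralBinom n
  have h2 := succ_mul_catalan_eq_centralBinom (n + 1)
  have h3 := Nat.succ_mul_centralBinom_succ n
  have key : (n + 2) * catalan (n + 1) = (4 * n + 2) * catalan n := by
    refine Nat.eq_of_mul_eq_mul_left (show 0 < n + 1 by omega) ?_
    calc (n + 1) * ((n + 2) * catalan (n + 1))
        = (n + 1) * ((n + 1 + 1) * catalan (n + 1)) := by ring
      _ = (n + 1) * (n + 1).centralBinom := by rw [h2]
      _ = 2 * (2 * n + 1) * n.centralBinom := h3
      _ = 2 * (2 * n + 1) * ((n + 1) * catalan n) := by rw [h1]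
      _ = (n + 1) * ((4 * n + 2) * catalan n) := by ring
  refine Nat.le_of_mul_le_mul_left ?_ (show 0 < n + 2 by omega)
  calc (n + 2) * catalan (n + 1) = (4 * n + 2) * catalan n := key
    _ ≤ (4 * n + 8) * catalan n := Nat.mul_le_mul_right _ (by omega)
    _ = (n + 2) * (4 * catalan n) := by ring

lemma catalan_add_le (a k : ℕ) : catalan (a + k) ≤ 4 ^ k * catalan a := by
  induction k with
  | zero => simp
  | succ k ih =>
    calc catalan (a + (k + 1)) = catalan ((a + k) + 1) := by ring_nf
    _ ≤ 4 * catalan (a + k) := catalan_succ_le _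
    _ ≤ 4 * (4 ^ k * catalan a) := by exact Nat.mul_le_mul_left _ ih
    _ = 4 ^ (k+1) * catalan a := by ring

lemma sum_antidiagonalTuple_succ {M : Type*} [AddCommMonoid M] (k n : ℕ)
    (f : (Fin (k + 1) → ℕ) → M) :
    ∑ r ∈ Finset.Nat.antidiagonalTuple (k + 1) n, f r
      = ∑ ab ∈ Finset.HasAntidiagonal.antidiagonal n,
          ∑ x ∈ Finset.Nat.antidiagonalTuple k ab.2, f (Fin.cons ab.1 x) := by
  rw [Finset.sum_sigma']
  refine Finset.sum_nbij' (fun r => ⟨(r 0, ∑ i, Fin.tail r i), Fin.tail r⟩)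
    (fun p => Fin.cons p.1.1 p.2) ?_ ?_ ?_ ?_ ?_
  · intro r hr
    rw [Finset.Nat.mem_antidiagonalTuple] at hr
    simp only [Finset.mem_sigma, Finset.HasAntidiagonal.mem_antidiagonal, Finset.Nat.mem_antidiagonalTuple]
    exact ⟨by rw [← hr, Fin.sum_univ_succ]; rfl, trivial⟩
  · intro p hp
    rw [Finset.mem_sigma, Finset.HasAntidiagonal.mem_antidiagonal, Finset.Nat.mem_antidiagonalTuple] at hp
    rw [Finset.Nat.mem_antidiagonalTuple, Fin.sum_cons, hp.2, hp.1]
  · intro r _; exact Fin.cons_self_tail r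
  · intro p hp
    rw [Finset.mem_sigma, Finset.HasAntidiagonal.mem_antidiagonal, Finset.Nat.mem_antidiagonalTuple] at hp
    refine Sigma.ext ?_ ?_
    · simp [Fin.tail_cons, hp.2]
    · simp [Fin.tail_cons]
  · intro r _; rw [Fin.cons_self_tail]

/-- full convolution sum -/
def Scount (k N : ℕ) : ℕ := ∑ r ∈ Finset.Nat.antidiagonalTuple k N, ∏ i, catalan (r i)

lemma Scount_le (k N : ℕ) : Scount (k + 1) N ≤ catalan (N + k) := by
  induction k generalizing N with
  | zero =>
    simp [Scount, Finset.Nat.antidiagonalTuple_one]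
  | succ k ih =>
    have hrec : Scount (k + 2) N
        = ∑ ab ∈ Finset.HasAntidiagonal.antidiagonal N, catalan ab.1 * Scount (k + 1) ab.2 := by
      rw [Scount, sum_antidiagonalTuple_succ]
      refine Finset.sum_congr rfl fun ab _ => ?_
      rw [Scount, Finset.mul_sum]
      refine Finset.sum_congr rfl fun x _ => ?_
      rw [Fin.prod_univ_succ]
      simp [Fin.tail_cons]
    rw [hrec]
    calc ∑ ab ∈ Finset.HasAntidiagonal.antidiagonal N, catalan ab.1 * Scount (k + 1) ab.2
        ≤ ∑ ab ∈ Finset.HasAntidiagonal.antidiagonal N, catalan ab.1 * catalan (ab.2 + k) :=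
          Finset.sum_le_sum fun ab _ => Nat.mul_le_mul_left _ (ih ab.2)
      _ = ∑ i ∈ Finset.range (N + 1), catalan i * catalan ((N - i) + k) := by
          rw [Finset.Nat.sum_antidiagonal_eq_sum_range_succ
            (fun x y => catalan x * catalan (y + k))]
      _ = ∑ i ∈ Finset.range (N + 1), catalan i * catalan (N + k - i) := by
          refine Finset.sum_congr rfl fun i hi => ?_
          rw [Finset.mem_range] at hi
          congr 2
          omega
      _ ≤ ∑ i ∈ Finset.range (N + k + 1), catalan i * catalan (N + k - i) :=
          Finset.sum_le_sum_of_subset (by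
            exact Finset.range_subset_range.mpr (by omega))
      _ = catalan (N + k + 1) := by
          rw [catalan_succ', Finset.Nat.sum_antidiagonal_eq_sum_range_succ
            (fun x y => catalan x * catalan y)]
      _ = catalan (N + (k + 1)) := by ring_nf



/-- `F n m` = ∑ C_{r₁}⋯C_{r_m} over m-tuples of integers r_i ≥ 1 with r₁+⋯+r_m = n−m+2. -/
def Fcount (n m : ℕ) : ℕ :=
  ∑ r ∈ (Finset.Nat.antidiagonalTuple m (n - m + 2)).filter (fun r => ∀ i, 1 ≤ r i),
    ∏ i, catalan (r i)

/-- For every m ≥ 2 there are constants c₁, c₂ > 0 with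
c₁·C_{n−m+2} ≤ F(n,m) ≤ c₂·C_{n−m+2} for all n ≥ 2m−2. -/
theorem stmt_9 (m : ℕ) (hm : 2 ≤ m) :
    ∃ c₁ c₂ : ℝ, 0 < c₁ ∧ 0 < c₂ ∧ ∀ n : ℕ, 2 * m - 2 ≤ n →
      c₁ * (catalan (n - m + 2) : ℝ) ≤ (Fcount n m : ℝ) ∧
        (Fcount n m : ℝ) ≤ c₂ * (catalan (n - m + 2) : ℝ) := by
  obtain ⟨k, rfl⟩ : ∃ k, m = k + 1 := ⟨m - 1, by omega⟩
  refine ⟨((4 : ℝ) ^ k)⁻¹, (4 : ℝ) ^ k, by positivity, by positivity, fun n hn => ?_⟩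
  set N := n - (k + 1) + 2 with hNdef
  have hNk : k + 1 ≤ N := by omega
  set a := N - k with hadef
  have haN : a + k = N := by omega
  -- the special tuple
  have ha1 : 1 ≤ a := by omega
  have hmem : (Fin.cons a (fun _ => 1) : Fin (k + 1) → ℕ) ∈
      (Finset.Nat.antidiagonalTuple (k + 1) N).filter (fun r => ∀ i, 1 ≤ r i) := by
    rw [Finset.mem_filter, Finset.Nat.mem_antidiagonalTuple]
    constructor
    · rw [Fin.sum_cons]
      simp [haN]
    · intro i
      refine Fin.cases ?_ ?_ i
      · simpa using ha1
      · intro j; simp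
  have hprod : (∏ i, catalan ((Fin.cons a (fun _ => 1) : Fin (k + 1) → ℕ) i)) = catalan a := by
    rw [Fin.prod_univ_succ]
    simp [catalan_one]
  -- lower bound in ℕ
  have hlow : catalan a ≤ Fcount n (k + 1) := by
    rw [← hprod, Fcount]
    exact Finset.single_le_sum (f := fun r => ∏ i, catalan (r i)) (fun r _ => Nat.zero_le _) hmem
  have hlow2 : catalan N ≤ 4 ^ k * Fcount n (k + 1) := by
    calc catalan N = catalan (a + k) := by rw [haN]
      _ ≤ 4 ^ k * catalan a := catalan_add_le a k
      _ ≤ 4 ^ k * Fcount n (k + 1) := Nat.mul_le_mul_left _ hlow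
  -- upper bound in ℕ
  have hup : Fcount n (k + 1) ≤ 4 ^ k * catalan N := by
    calc Fcount n (k + 1) ≤ Scount (k + 1) N :=
          Finset.sum_le_sum_of_subset (Finset.filter_subset _ _)
      _ ≤ catalan (N + k) := Scount_le k N
      _ ≤ 4 ^ k * catalan N := catalan_add_le N k
  constructor
  · rw [inv_mul_le_iff₀ (by positivity)]
    exact_mod_cast hlow2
  · exact_mod_cast hup
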